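/- Let 0 ∈ R^d lie in the open simplex spanned by a finite set Q ⊂ R^d of points all at distance r from 0 (i.e., 0 is a convex combination with strictly positive coefficients of the points of Q, and ‖q‖ = r for all q ∈ Q). Then for every x ∈ R^d there exists q ∈ Q with ‖x − q‖ ≥ r. Consequently max_{q ∈ Q} ‖x − q‖ attains its minimum over x ∈ R^d at x = 0. -/

import Mathlib

open Metric
noncomputable section

/-- If `0` lies in the open simplex spanned by a finite set `Q` of points at common distance
`r` from the origin, then for every `x` some point of `Q` is at distance at least `r` from
`x`; consequently `x ↦ max_{q ∈ Q} ‖x − q‖` attains its minimum at `x = 0`. -/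
theorem center_in_open_simplex_min {d : ℕ} (Q : Finset (EuclideanSpace ℝ (Fin d)))
    (r : ℝ) (hr : 0 < r) (hQ : ∀ q ∈ Q, ‖q‖ = r)
    (lam : EuclideanSpace ℝ (Fin d) → ℝ)
    (hpos : ∀ q ∈ Q, 0 < lam q) (hsum : ∑ q ∈ Q, lam q = 1)
    (hcomb : ∑ q ∈ Q, lam q • q = (0 : EuclideanSpace ℝ (Fin d))) :
    (∀ x : EuclideanSpace ℝ (Fin d), ∃ q ∈ Q, r ≤ ‖x - q‖) ∧
    (∀ x : EuclideanSpace ℝ (Fin d),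
      sSup ((fun q => ‖(0 : EuclideanSpace ℝ (Fin d)) - q‖) '' Q) ≤
        sSup ((fun q => ‖x - q‖) '' Q)) := by
  have hQne : Q.Nonempty := by
    by_contra h
    rw [Finset.not_nonempty_iff_eq_empty] at h
    simp [h] at hsum
  have key : ∀ x : EuclideanSpace ℝ (Fin d), ∃ q ∈ Q, r ≤ ‖x - q‖ := by
    intro x
    by_contra h
    push_neg at h
    -- weighted sum of ‖x - q‖²
    have hexp : ∀ q ∈ Q, ‖x - q‖ ^ 2 = ‖x‖ ^ 2 - 2 * inner ℝ x q + r ^ 2 := by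
      intro q hq
      have := @norm_sub_sq_real (EuclideanSpace ℝ (Fin d)) _ _ x q
      rw [this, hQ q hq]
    have hsum2 : ∑ q ∈ Q, lam q * ‖x - q‖ ^ 2 = ‖x‖ ^ 2 + r ^ 2 := by
      have hin : ∑ q ∈ Q, lam q * (inner ℝ x q : ℝ) = 0 := by
        have : (inner ℝ x (∑ q ∈ Q, lam q • q) : ℝ) = 0 := by
          rw [hcomb, inner_zero_right]
        rw [inner_sum] at this
        simpa [inner_smul_right, mul_comm] using this
      calc ∑ q ∈ Q, lam q * ‖x - q‖ ^ 2
          = ∑ q ∈ Q, (lam q * ‖x‖ ^ 2 - 2 * (lam q * inner ℝ x q) + lam q * r ^ 2) := by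
            apply Finset.sum_congr rfl
            intro q hq
            rw [hexp q hq]; ring
        _ = (∑ q ∈ Q, lam q) * ‖x‖ ^ 2 - 2 * (∑ q ∈ Q, lam q * (inner ℝ x q : ℝ))
              + (∑ q ∈ Q, lam q) * r ^ 2 := by
            rw [Finset.sum_add_distrib, Finset.sum_sub_distrib, ← Finset.sum_mul,
              ← Finset.mul_sum, ← Finset.sum_mul]
        _ = ‖x‖ ^ 2 + r ^ 2 := by rw [hsum, hin]; ring
    have hlt : ∑ q ∈ Q, lam q * ‖x - q‖ ^ 2 < ∑ q ∈ Q, lam q * r ^ 2 := by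
      apply Finset.sum_lt_sum_of_nonempty hQne
      intro q hq
      have h1 : ‖x - q‖ ^ 2 < r ^ 2 := by
        apply sq_lt_sq' _ (h q hq)
        linarith [norm_nonneg (x - q)]
      exact mul_lt_mul_of_pos_left h1 (hpos q hq)
    rw [hsum2, ← Finset.sum_mul, hsum, one_mul] at hlt
    nlinarith [sq_nonneg ‖x‖]
  refine ⟨key, fun x => ?_⟩
  have hL : sSup ((fun q => ‖(0 : EuclideanSpace ℝ (Fin d)) - q‖) '' Q) = r := by
    have : (fun q => ‖(0 : EuclideanSpace ℝ (Fin d)) - q‖) '' Q = {r} := by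
      apply Set.eq_singleton_iff_nonempty_unique_mem.mpr
      constructor
      · exact (Set.Nonempty.image _ (by exact_mod_cast hQne))
      · rintro y ⟨q, hq, rfl⟩
        simp [norm_sub_rev, hQ q (by exact_mod_cast hq)]
    rw [this, csSup_singleton]
  rw [hL]
  obtain ⟨q, hq, hrq⟩ := key x
  have hbdd : BddAbove ((fun q => ‖x - q‖) '' Q) :=
    (Q.finite_toSet.image _).bddAbove
  exact le_trans hrq (le_csSup hbdd ⟨q, by exact_mod_cast hq, rfl⟩)
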